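/- Let R be a ring (associative with identity, not necessarily commutative). Then R is an abelian ring in which every zero-divisor is a very idempotent or nilpotent if and only if R is isomorphic (as a ring) to one of the following: (a) a D-ring; (b) a Boolean ring; (c) ℤ/3ℤ × ℤ/3ℤ; or (d) ℤ/3ℤ × B where B is a Boolean ring. -/

import Mathlib

universe u v

/-- An element `e` is a very idempotent if `e` or `-e` is an idempotent. -/
def IsVeryIdempotent {R : Type u} [Ring R] (e : R) : Prop :=
  IsIdempotentElem e ∨ IsIdempotentElem (-e)

/-- `a` is uniquely weakly nil-clean: it is a sum of a nilpotent and a very idempotent,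
and for any two such representations `a = w₁ + e₁ = w₂ + e₂` one has `e₁ ^ 2 = e₂ ^ 2`. -/
def IsUniquelyWeaklyNilClean {R : Type u} [Ring R] (a : R) : Prop :=
  (∃ w e : R, IsNilpotent w ∧ IsVeryIdempotent e ∧ a = w + e) ∧
  ∀ w₁ e₁ w₂ e₂ : R, IsNilpotent w₁ → IsVeryIdempotent e₁ → IsNilpotent w₂ →
    IsVeryIdempotent e₂ → a = w₁ + e₁ → a = w₂ + e₂ → e₁ ^ 2 = e₂ ^ 2

/-- A ring is uniquely weakly nil-clean if every element is. -/
def UniquelyWeaklyNilCleanRing (R : Type u) [Ring R] : Prop :=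
  ∀ a : R, IsUniquelyWeaklyNilClean a

/-- `a` is uniquely nil-clean: it is a sum of a nilpotent and an idempotent,
and for any two such representations `a = w₁ + e₁ = w₂ + e₂` one has `e₁ = e₂`. -/
def IsUniquelyNilClean {R : Type u} [Ring R] (a : R) : Prop :=
  (∃ w e : R, IsNilpotent w ∧ IsIdempotentElem e ∧ a = w + e) ∧
  ∀ w₁ e₁ w₂ e₂ : R, IsNilpotent w₁ → IsIdempotentElem e₁ → IsNilpotent w₂ →
    IsIdempotentElem e₂ → a = w₁ + e₁ → a = w₂ + e₂ → e₁ = e₂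

/-- A ring is uniquely nil-clean if every element is. -/
def UniquelyNilCleanRing (R : Type u) [Ring R] : Prop :=
  ∀ a : R, IsUniquelyNilClean a

/-- `a` is a zero-divisor: there are nonzero `b, c` with `a * b = 0` and `c * a = 0`. -/
def IsZeroDivisorPair {R : Type u} [Ring R] (a : R) : Prop :=
  ∃ b c : R, b ≠ 0 ∧ c ≠ 0 ∧ a * b = 0 ∧ c * a = 0

/-- A ring is abelian if every idempotent is central. -/
def AbelianRing (R : Type u) [Ring R] : Prop :=
  ∀ e : R, IsIdempotentElem e → ∀ x : R, e * x = x * e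

/-- A ring is periodic if every element satisfies `a ^ m = a ^ n` for distinct positive `m, n`. -/
def PeriodicRing (R : Type u) [Ring R] : Prop :=
  ∀ a : R, ∃ m n : ℕ, 0 < m ∧ 0 < n ∧ m ≠ n ∧ a ^ m = a ^ n

/-- A Boolean ring: every element is idempotent. -/
def IsBooleanRing (R : Type u) [Ring R] : Prop :=
  ∀ a : R, IsIdempotentElem a

/-- `R / J(R)` is isomorphic to `S`, expressed via a surjective ring homomorphism
whose kernel is exactly the Jacobson radical of `R`. -/
def QuotJacobsonIsoTo (R : Type u) [Ring R] (S : Type v) [Ring S] : Prop :=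
  ∃ f : R →+* S, Function.Surjective f ∧
    ∀ a : R, f a = 0 ↔ a ∈ Ideal.jacobson (⊥ : Ideal R)

/- ### Auxiliary lemmas -/

section Aux

variable {R : Type u} [Ring R]

private lemma zmod3_cases : ∀ z : ZMod 3, z = 0 ∨ z = 1 ∨ z = 2 := by decide

private lemma idem_nil_zero {p : R} (hp : IsIdempotentElem p) (hn : IsNilpotent p) : p = 0 := by
  obtain ⟨k, hk⟩ := hn
  have h1 : p ^ (k + 1) = p := hp.pow_succ_eq k
  rw [pow_succ, hk, zero_mul] at h1
  exact h1.symm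

private lemma nsmul_mod {g : R} (hg3 : g + g + g = 0) (k : ℕ) :
    (k % 3) • g = k • g := by
  have h3 : (3 : ℕ) • g = 0 := by
    rw [show (3 : ℕ) = 1 + 1 + 1 from rfl, add_smul, add_smul, one_smul]
    exact hg3
  conv_rhs => rw [← Nat.mod_add_div k 3]
  rw [add_smul, mul_comm 3 (k / 3), mul_smul, h3, smul_zero, add_zero]

private lemma pick3 {g : R} (hg3 : g + g + g = 0) {y : R}
    (hy : y = 0 ∨ y = g ∨ y = -g) : ∃ m : ZMod 3, (m.val) • g = y := by
  haveI : Fact (1 < 3) := ⟨by norm_num⟩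
  rcases hy with h | h | h
  · exact ⟨0, by rw [h, ZMod.val_zero, zero_smul]⟩
  · exact ⟨1, by rw [h, ZMod.val_one, one_smul]⟩
  · refine ⟨2, ?_⟩
    rw [h, show (2 : ZMod 3).val = 2 from rfl, two_nsmul]
    exact eq_neg_of_add_eq_zero_left hg3

private lemma zd_corner (hab : AbelianRing R) {e : R} (he : IsIdempotentElem e)
    (he1 : e ≠ 1) (x : R) : IsZeroDivisorPair (e * x) := by
  have h1 : e * x * e = e * x := by
    rw [mul_assoc, ← hab e he x, ← mul_assoc, he.eq]
  have h2 : e * (e * x) = e * x := by rw [← mul_assoc, he.eq]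
  refine ⟨1 - e, 1 - e, sub_ne_zero.mpr (Ne.symm he1), sub_ne_zero.mpr (Ne.symm he1), ?_, ?_⟩
  · rw [mul_sub, mul_one, h1, sub_self]
  · rw [sub_mul, one_mul, h2, sub_self]

private lemma corner_unit_eq (hab : AbelianRing R) {g u v : R} (hg : IsIdempotentElem g)
    (hg0 : g ≠ 0) (hu : g * u = u) (huv : u * v = g) (hvu : v * u = g)
    (hP : IsVeryIdempotent u ∨ IsNilpotent u) : u = g ∨ u = -g := by
  have hug : u * g = u := by rw [← hab g hg u, hu]
  rcases hP with (hi | hi) | hn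
  · left
    have h1 : u * g = g := by
      calc u * g = u * (u * v) := by rw [huv]
      _ = (u * u) * v := by rw [mul_assoc]
      _ = u * v := by rw [hi.eq]
      _ = g := huv
    exact hug.symm.trans h1
  · right
    have h2 : u * u = -u := by have := hi.eq; rwa [neg_mul_neg] at this
    have h1 : u * g = -g := by
      calc u * g = u * (u * v) := by rw [huv]
      _ = (u * u) * v := by rw [mul_assoc]
      _ = -(u * v) := by rw [h2, neg_mul]
      _ = -g := by rw [huv]
    exact hug.symm.trans h1
  · exfalso
    obtain ⟨k, hk⟩ := hn
    have hcuv : Commute u v := huv.trans hvu.symm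
    have hu1 : u ^ (k + 1) = 0 := by rw [pow_succ, hk, zero_mul]
    have hgk : g ^ (k + 1) = 0 := by
      rw [← huv, hcuv.mul_pow, hu1, zero_mul]
    exact hg0 (by rw [← hg.pow_succ_eq k, hgk])

private lemma corner_nil (hab : AbelianRing R)
    (hzd : ∀ a : R, IsZeroDivisorPair a → IsVeryIdempotent a ∨ IsNilpotent a)
    {e : R} (he : IsIdempotentElem e) (he0 : e ≠ 0) (he1 : e ≠ 1)
    {n : R} (hn : IsNilpotent n) (hen : e * n = n) : n = 0 ∨ n = -(2 * e) := by
  obtain ⟨U, hU⟩ := hn.isUnit_one_add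
  set w : R := ↑U⁻¹ with hwdef
  have hw1 : (1 + n) * w = 1 := by rw [← hU]; exact U.mul_inv
  have hw2 : w * (1 + n) = 1 := by rw [← hU]; exact U.inv_mul
  have hnw : n * w = 1 - w := by
    have h := hw1
    rw [add_mul, one_mul] at h
    exact eq_sub_of_add_eq' h
  have hew : e * w = w - 1 + e := by
    have h1 : (1 - e) * (1 + n) = 1 - e := by
      rw [mul_add, mul_one, sub_mul, one_mul, hen, sub_self, add_zero]
    have h2 : (1 - e) * w = 1 - e := by
      calc (1 - e) * w = ((1 - e) * (1 + n)) * w := by rw [h1]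
      _ = (1 - e) * ((1 + n) * w) := by rw [mul_assoc]
      _ = 1 - e := by rw [hw1, mul_one]
    have h3 : e * w = w - (1 - e) * w := by noncomm_ring
    rw [h3, h2]; noncomm_ring
  have huv : (e + n) * w = e := by
    rw [add_mul, hew, hnw]; noncomm_ring
  have hvu : w * (e + n) = e := by
    have hwn : w * n = 1 - w := by
      have h := hw2
      rw [mul_add, mul_one] at h
      exact eq_sub_of_add_eq' h
    rw [mul_add, hwn, ← hab e he w, hew]; noncomm_ring
  have hP : IsVeryIdempotent (e + n) ∨ IsNilpotent (e + n) := by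
    have hform : e + n = e * (1 + n) := by rw [mul_add, mul_one, hen]
    rw [hform]
    exact hzd _ (zd_corner hab he he1 (1 + n))
  have hgu : e * (e + n) = e + n := by rw [mul_add, he.eq, hen]
  rcases corner_unit_eq hab he he0 hgu huv hvu hP with h | h
  · left; exact add_eq_left.mp h
  · right
    have h2 : n = -e - e := eq_sub_of_add_eq' h
    rw [h2]; noncomm_ring

private lemma two_e_eq_zero (hab : AbelianRing R)
    (hzd : ∀ a : R, IsZeroDivisorPair a → IsVeryIdempotent a ∨ IsNilpotent a)
    {e : R} (he : IsIdempotentElem e) (he0 : e ≠ 0) (he1 : e ≠ 1)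
    (h2 : IsNilpotent (2 * e)) : 2 * e = 0 := by
  have hy : (2 * e) * (2 * e) = 4 * e := by
    have h : (2 * e) * (2 * e) = 4 * (e * e) := by noncomm_ring
    rw [h, he.eq]
  have hnilsq : IsNilpotent ((2 * e) * (2 * e)) :=
    (Commute.refl (2 * e)).isNilpotent_mul_right h2
  have hesq : e * ((2 * e) * (2 * e)) = (2 * e) * (2 * e) := by
    have hx : e * ((2 * e) * (2 * e)) = 4 * (e * (e * e)) := by noncomm_ring
    rw [he.eq] at hx
    rw [hx, he.eq, hy]
  rcases corner_nil hab hzd he he0 he1 hnilsq hesq with hA | hB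
  · -- (2e)² = 0, i.e. 4e = 0 : bad element 1 + e
    by_contra hne
    have h4e : 4 * e = 0 := by rw [← hy]; exact hA
    have hbx : (1 + e) * (2 * e) = 0 := by
      calc (1 + e) * (2 * e) = 2 * e + 2 * (e * e) := by noncomm_ring
      _ = 4 * e := by rw [he.eq]; noncomm_ring
      _ = 0 := h4e
    have hxb : (2 * e) * (1 + e) = 0 := by
      calc (2 * e) * (1 + e) = 2 * e + 2 * (e * e) := by noncomm_ring
      _ = 4 * e := by rw [he.eq]; noncomm_ring
      _ = 0 := h4e
    have hx2 : (1 + e) * (1 + e) = 1 - e := by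
      calc (1 + e) * (1 + e) = 1 + 2 * e + e * e := by noncomm_ring
      _ = (1 - e) + 4 * e := by rw [he.eq]; noncomm_ring
      _ = 1 - e := by rw [h4e, add_zero]
    rcases hzd (1 + e) ⟨2 * e, 2 * e, hne, hne, hbx, hxb⟩ with (hi | hi) | hn
    · have hEq : 1 - e = 1 + e := hx2.symm.trans hi.eq
      apply hne
      have h2e : 2 * e = (1 + e) - (1 - e) := by noncomm_ring
      rw [h2e, ← hEq, sub_self]
    · have h' : (1 + e) * (1 + e) = -(1 + e) := by
        have := hi.eq; rwa [neg_mul_neg] at this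
      have hEq2 : 1 - e = -(1 + e) := hx2.symm.trans h'
      apply hne
      have hr : (2 : R) * e = ((1 - e) + (1 + e)) * e := by noncomm_ring
      rw [hr, hEq2, neg_add_cancel, zero_mul]
    · have hsq : IsNilpotent ((1 + e) * (1 + e)) :=
        (Commute.refl (1 + e)).isNilpotent_mul_right hn
      rw [hx2] at hsq
      have := idem_nil_zero he.one_sub hsq
      exact he1 (sub_eq_zero.mp this).symm
  · -- (2e)² = -(2e): powers cycle
    have hB' : (2 * e) * (2 * e) = -(2 * e) := hB
    have cyc : ∀ k : ℕ, (2 * e) ^ (k + 1) = 2 * e ∨ (2 * e) ^ (k + 1) = -(2 * e) := by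
      intro k
      induction k with
      | zero => left; rw [pow_one]
      | succ k ih =>
        rw [pow_succ]
        rcases ih with h | h
        · right; rw [h, hB']
        · left; rw [h, neg_mul, hB', neg_neg]
    obtain ⟨k, hk⟩ := h2
    have hk1 : (2 * e) ^ (k + 1) = 0 := by rw [pow_succ, hk, zero_mul]
    rcases cyc k with h | h
    · rw [hk1] at h; exact h.symm
    · rw [hk1] at h; exact neg_eq_zero.mp h.symm

private lemma reduced_of_idem (hab : AbelianRing R)
    (hzd : ∀ a : R, IsZeroDivisorPair a → IsVeryIdempotent a ∨ IsNilpotent a)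
    {e : R} (he : IsIdempotentElem e) (he0 : e ≠ 0) (he1 : e ≠ 1) :
    ∀ n : R, IsNilpotent n → n = 0 := by
  intro n hn
  have step : ∀ g : R, IsIdempotentElem g → g ≠ 0 → g ≠ 1 → g * n = 0 := by
    intro g hg hg0 hg1
    have hgn : IsNilpotent (g * n) := by
      have hc : Commute g n := hab g hg n
      exact hc.isNilpotent_mul_left hn
    have hgen : g * (g * n) = g * n := by rw [← mul_assoc, hg.eq]
    rcases corner_nil hab hzd hg hg0 hg1 hgn hgen with h | h
    · exact h
    · have h2g : IsNilpotent (2 * g) := by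
        have : 2 * g = -(g * n) := by rw [h, neg_neg]
        rw [this]; exact hgn.neg
      rw [h, two_e_eq_zero hab hzd hg hg0 hg1 h2g, neg_zero]
  have hf : IsIdempotentElem (1 - e) := he.one_sub
  have hf0 : (1 : R) - e ≠ 0 := sub_ne_zero.mpr (Ne.symm he1)
  have hf1 : (1 : R) - e ≠ 1 := fun hh => he0 (sub_eq_self.mp hh)
  have h1 := step e he he0 he1
  have h2 := step (1 - e) hf hf0 hf1
  have h3 : n = e * n + (1 - e) * n := by noncomm_ring
  rw [h3, h1, h2, add_zero]

private lemma corner_sq (hab : AbelianRing R)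
    (hzd : ∀ a : R, IsZeroDivisorPair a → IsVeryIdempotent a ∨ IsNilpotent a)
    {e : R} (he : IsIdempotentElem e) (he0 : e ≠ 0) (he1 : e ≠ 1) (x : R) :
    (e * x) * (e * x) = e * x ∨ (e * x) * (e * x) = -(e * x) := by
  rcases hzd _ (zd_corner hab he he1 x) with (h | h) | h
  · left; exact h.eq
  · right; have := h.eq; rwa [neg_mul_neg] at this
  · left; rw [reduced_of_idem hab hzd he he0 he1 _ h]; simp

private lemma corner_z3 (hab : AbelianRing R) {g : R} (hg : IsIdempotentElem g)
    (hg0 : g ≠ 0) (hg3 : g + g + g = 0)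
    (hsq : ∀ x : R, (g * x) * (g * x) = g * x ∨ (g * x) * (g * x) = -(g * x)) :
    ∀ x : R, g * x = 0 ∨ g * x = g ∨ g * x = -g := by
  have hcg := hab g hg
  have key : ∀ x : R, (g * x) * (g * x) = g * x → (g * x = 0 ∨ g * x = g) := by
    intro x hx
    set a := g * x with ha
    have hga : g * a = a := by rw [ha, ← mul_assoc, hg.eq]
    have hag : a * g = a := by rw [ha, mul_assoc, ← hcg x, ← mul_assoc, hg.eq]
    have h3a : a + a + a = 0 := by
      rw [ha]
      have hr : g * x + g * x + g * x = (g + g + g) * x := by noncomm_ring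
      rw [hr, hg3, zero_mul]
    set u := a + a - g with hu
    have hug : g * u = u := by rw [hu, mul_sub, mul_add, hga, hg.eq]
    have huu : u * u = g := by
      rw [hu]
      have expand : (a + a - g) * (a + a - g) =
          (a * a + a * a + a * a + a * a) - (a * g + a * g) - (g * a + g * a) + g * g := by
        noncomm_ring
      rw [expand, hx, hag, hga, hg.eq]
      abel
    have hP : IsVeryIdempotent u ∨ IsNilpotent u := by
      left
      have hform : u = g * (x + x - 1) := by rw [hu, ha]; noncomm_ring
      rcases hsq (x + x - 1) with h | h
      · left; rwa [← hform] at h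
      · right
        show (-u) * (-u) = -u
        rw [neg_mul_neg]
        rwa [← hform] at h
    rcases corner_unit_eq hab hg hg0 hug huu huu hP with h | h
    · right
      rw [hu] at h
      have h2 : a + a = g + g := sub_eq_iff_eq_add.mp h
      have hgg : g + g = -g := eq_neg_of_add_eq_zero_left hg3
      have haa : a + a = -a := eq_neg_of_add_eq_zero_left h3a
      have hfin : -a = -g := by rw [← haa, h2, hgg]
      exact neg_inj.mp hfin
    · left
      rw [hu] at h
      have h2 : a + a = -g + g := sub_eq_iff_eq_add.mp h
      rw [neg_add_cancel] at h2
      have hr : a = a + a + a - (a + a) := by abel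
      rw [hr, h3a, h2, sub_zero]
  intro x
  rcases hsq x with h | h
  · rcases key x h with h0 | h1
    · exact Or.inl h0
    · exact Or.inr (Or.inl h1)
  · have hneg : (g * (-x)) * (g * (-x)) = g * (-x) := by
      rw [mul_neg, neg_mul_neg, h]
    rcases key (-x) hneg with h0 | h1
    · left; rw [mul_neg] at h0; exact neg_eq_zero.mp h0
    · right; right; rw [mul_neg] at h1; exact neg_eq_iff_eq_neg.mp h1

private lemma corner_split (hab : AbelianRing R)
    (hzd : ∀ a : R, IsZeroDivisorPair a → IsVeryIdempotent a ∨ IsNilpotent a)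
    {e : R} (he : IsIdempotentElem e) (he0 : e ≠ 0) (he1 : e ≠ 1) :
    ∃ g b : R, IsIdempotentElem g ∧ IsIdempotentElem b ∧ g * b = 0 ∧ g + b = e ∧
      (g + g + g = 0) ∧ (∀ x : R, (b * x) * (b * x) = b * x) ∧
      (∀ x : R, g * x = 0 ∨ g * x = g ∨ g * x = -g) := by
  have hsq := corner_sq hab hzd he he0 he1
  have hchar : (2 : R) * e = 0 ∨ (6 : R) * e = 0 := by
    rcases hsq 2 with h | h
    · left
      have h4 : (4 : R) * e = e * 2 := by
        have hr : (e * 2) * (e * 2) = 4 * (e * e) := by noncomm_ring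
        rw [hr, he.eq] at h; exact h
      have hr2 : (2 : R) * e = 4 * e - e * 2 := by noncomm_ring
      rw [hr2, h4, sub_self]
    · right
      have h4 : (4 : R) * e = -(e * 2) := by
        have hr : (e * 2) * (e * 2) = 4 * (e * e) := by noncomm_ring
        rw [hr, he.eq] at h; exact h
      have hr2 : (6 : R) * e = 4 * e + e * 2 := by noncomm_ring
      rw [hr2, h4, neg_add_cancel]
  rcases hchar with h2 | h6
  · refine ⟨0, e, IsIdempotentElem.zero, he, by rw [zero_mul], by rw [zero_add],
      by simp, ?_, fun x => Or.inl (by rw [zero_mul])⟩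
    intro x
    rcases hsq x with h | h
    · exact h
    · rw [h]
      have h2x : (2 : R) * (e * x) = 0 := by
        have hr : (2 : R) * (e * x) = ((2 : R) * e) * x := by noncomm_ring
        rw [hr, h2, zero_mul]
      have hr : -(e * x) = e * x - 2 * (e * x) := by noncomm_ring
      rw [hr, h2x, sub_zero]
  · have h6x : ∀ y : R, (6 : R) * (e * y) = 0 := by
      intro y
      have hr : (6 : R) * (e * y) = ((6 : R) * e) * y := by noncomm_ring
      rw [hr, h6, zero_mul]
    have hg : IsIdempotentElem ((4 : R) * e) := by
      show ((4 : R) * e) * (4 * e) = 4 * e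
      have h1 : ((4 : R) * e) * (4 * e) = 16 * (e * e) := by noncomm_ring
      rw [h1, he.eq]
      have hr : (16 : R) * e = 4 * e + 2 * (6 * e) := by noncomm_ring
      rw [hr, h6, mul_zero, add_zero]
    have hb : IsIdempotentElem ((3 : R) * e) := by
      show ((3 : R) * e) * (3 * e) = 3 * e
      have h1 : ((3 : R) * e) * (3 * e) = 9 * (e * e) := by noncomm_ring
      rw [h1, he.eq]
      have hr : (9 : R) * e = 3 * e + 6 * e := by noncomm_ring
      rw [hr, h6, add_zero]
    have hgb : ((4 : R) * e) * (3 * e) = 0 := by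
      have h1 : ((4 : R) * e) * (3 * e) = 12 * (e * e) := by noncomm_ring
      rw [h1, he.eq]
      have hr : (12 : R) * e = 2 * (6 * e) := by noncomm_ring
      rw [hr, h6, mul_zero]
    have hsum : (4 : R) * e + 3 * e = e := by
      have hr : (4 : R) * e + 3 * e = e + 6 * e := by noncomm_ring
      rw [hr, h6, add_zero]
    have h3g : (4 : R) * e + 4 * e + 4 * e = 0 := by
      have hr : (4 : R) * e + 4 * e + 4 * e = 2 * (6 * e) := by noncomm_ring
      rw [hr, h6, mul_zero]
    have hbool : ∀ x : R, (((3 : R) * e) * x) * ((3 * e) * x) = (3 * e) * x := by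
      intro x
      have h1 : (((3 : R) * e) * x) * ((3 * e) * x) = 9 * ((e * x) * (e * x)) := by noncomm_ring
      rcases hsq x with h | h
      · rw [h1, h]
        have hr : (9 : R) * (e * x) = (3 * e) * x + 6 * (e * x) := by noncomm_ring
        rw [hr, h6x, add_zero]
      · rw [h1, h]
        have hr : (9 : R) * (-(e * x)) = (3 * e) * x - 2 * (6 * (e * x)) := by noncomm_ring
        rw [hr, h6x, mul_zero, sub_zero]
    have hz3 : ∀ x : R, ((4 : R) * e) * x = 0 ∨ (4 * e) * x = 4 * e ∨ (4 * e) * x = -(4 * e) := by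
      by_cases hg0 : ((4 : R) * e) = 0
      · intro x; left; rw [hg0, zero_mul]
      · apply corner_z3 hab hg hg0 h3g
        intro x
        have h1 : (((4 : R) * e) * x) * ((4 * e) * x) = 16 * ((e * x) * (e * x)) := by
          noncomm_ring
        rcases hsq x with h | h
        · left
          rw [h1, h]
          have hr : (16 : R) * (e * x) = (4 * e) * x + 2 * (6 * (e * x)) := by noncomm_ring
          rw [hr, h6x, mul_zero, add_zero]
        · right
          rw [h1, h]
          have hr : (16 : R) * (-(e * x)) = -((4 * e) * x) - 2 * (6 * (e * x)) := by noncomm_ring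
          rw [hr, h6x, mul_zero, sub_zero]
    exact ⟨4 * e, 3 * e, hg, hb, hgb, hsum, h3g, hbool, hz3⟩

private lemma bool_add (hab : AbelianRing R) {b₁ b₂ : R}
    (h1 : IsIdempotentElem b₁) (h2 : IsIdempotentElem b₂)
    (h12 : b₁ * b₂ = 0) (h21 : b₂ * b₁ = 0)
    (hB1 : ∀ x : R, (b₁ * x) * (b₁ * x) = b₁ * x)
    (hB2 : ∀ x : R, (b₂ * x) * (b₂ * x) = b₂ * x) (x : R) :
    ((b₁ + b₂) * x) * ((b₁ + b₂) * x) = (b₁ + b₂) * x := by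
  have hcr : (b₁ * x) * (b₂ * x) = 0 := by
    calc (b₁ * x) * (b₂ * x) = b₁ * ((x * b₂) * x) := by noncomm_ring
    _ = b₁ * ((b₂ * x) * x) := by rw [← hab b₂ h2 x]
    _ = (b₁ * b₂) * (x * x) := by noncomm_ring
    _ = 0 := by rw [h12, zero_mul]
  have hcr' : (b₂ * x) * (b₁ * x) = 0 := by
    calc (b₂ * x) * (b₁ * x) = b₂ * ((x * b₁) * x) := by noncomm_ring
    _ = b₂ * ((b₁ * x) * x) := by rw [← hab b₁ h1 x]
    _ = (b₂ * b₁) * (x * x) := by noncomm_ring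
    _ = 0 := by rw [h21, zero_mul]
  calc ((b₁ + b₂) * x) * ((b₁ + b₂) * x)
      = (b₁ * x) * (b₁ * x) + (b₁ * x) * (b₂ * x) + ((b₂ * x) * (b₁ * x) + (b₂ * x) * (b₂ * x)) := by
        noncomm_ring
  _ = (b₁ + b₂) * x := by rw [hB1 x, hB2 x, hcr, hcr']; noncomm_ring

private def cornerRing {h : R} (hh : IsIdempotentElem h)
    (hc : ∀ x : R, h * x = x * h) : Ring {x : R // h * x = x} := by
  letI : Zero {x : R // h * x = x} := ⟨⟨0, mul_zero h⟩⟩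
  letI : Add {x : R // h * x = x} := ⟨fun a b => ⟨a.1 + b.1, by rw [mul_add, a.2, b.2]⟩⟩
  letI : Neg {x : R // h * x = x} := ⟨fun a => ⟨-a.1, by rw [mul_neg, a.2]⟩⟩
  letI : Mul {x : R // h * x = x} := ⟨fun a b => ⟨a.1 * b.1, by rw [← mul_assoc, a.2]⟩⟩
  letI : One {x : R // h * x = x} := ⟨⟨h, hh.eq⟩⟩
  exact {
    add_assoc := fun a b c => Subtype.ext (add_assoc _ _ _)
    zero_add := fun a => Subtype.ext (zero_add _)
    add_zero := fun a => Subtype.ext (add_zero _)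
    add_comm := fun a b => Subtype.ext (add_comm _ _)
    left_distrib := fun a b c => Subtype.ext (mul_add _ _ _)
    right_distrib := fun a b c => Subtype.ext (add_mul _ _ _)
    zero_mul := fun a => Subtype.ext (zero_mul _)
    mul_zero := fun a => Subtype.ext (mul_zero _)
    mul_assoc := fun a b c => Subtype.ext (mul_assoc _ _ _)
    one_mul := fun a => Subtype.ext a.2
    mul_one := fun a => Subtype.ext ((hc a.1).symm.trans a.2)
    neg_add_cancel := fun a => Subtype.ext (neg_add_cancel _)
    nsmul := nsmulRec
    zsmul := zsmulRec }

private lemma z3_bool_case (hab : AbelianRing R) {g : R} (hg : IsIdempotentElem g)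
    (hg0 : g ≠ 0) (hg3 : g + g + g = 0)
    (hz3 : ∀ x : R, g * x = 0 ∨ g * x = g ∨ g * x = -g)
    (hbool : ∀ x : R, ((1 - g) * x) * ((1 - g) * x) = (1 - g) * x) :
    ∃ (B : Type u) (_ : Ring B), IsBooleanRing B ∧ Nonempty (R ≃+* (ZMod 3 × B)) := by
  haveI : Fact (1 < 3) := ⟨by norm_num⟩
  set h := 1 - g with hhdef
  have hh : IsIdempotentElem h := hg.one_sub
  have hch : ∀ x : R, h * x = x * h := hab h hh
  have hgh : g * h = 0 := by rw [hhdef, mul_sub, mul_one, hg.eq, sub_self]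
  have hgplush : g + h = 1 := by rw [hhdef]; abel
  letI instB : Ring {x : R // h * x = x} := cornerRing hh hch
  have hgs : ∀ s : {x : R // h * x = x}, g * s.1 = 0 := by
    intro s; rw [← s.2, ← mul_assoc, hgh, zero_mul]
  have hsg : ∀ s : {x : R // h * x = x}, s.1 * g = 0 := by
    intro s; rw [← hab g hg s.1]; exact hgs s
  have hBool : IsBooleanRing {x : R // h * x = x} := by
    intro a
    have hx := hbool a.1
    rw [a.2] at hx
    exact Subtype.ext hx
  let φ : (ZMod 3 × {x : R // h * x = x}) →+* R := {
    toFun := fun p => p.1.val • g + p.2.1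
    map_one' := by
      show (1 : ZMod 3).val • g + h = 1
      rw [ZMod.val_one, one_smul]
      exact hgplush
    map_mul' := fun p q => by
      show ((p.1 * q.1).val) • g + (p.2.1 * q.2.1) =
        (p.1.val • g + p.2.1) * (q.1.val • g + q.2.1)
      rw [ZMod.val_mul, nsmul_mod hg3]
      rw [mul_add, add_mul, add_mul]
      rw [smul_mul_smul_comm, hg.eq]
      rw [smul_mul_assoc, hgs q.2, smul_zero]
      rw [mul_smul_comm, hsg p.2, smul_zero]
      rw [mul_smul]
      abel
    map_zero' := by
      show (0 : ZMod 3).val • g + (0 : R) = 0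
      rw [ZMod.val_zero, zero_smul, add_zero]
    map_add' := fun p q => by
      show ((p.1 + q.1).val) • g + (p.2.1 + q.2.1) =
        (p.1.val • g + p.2.1) + (q.1.val • g + q.2.1)
      rw [ZMod.val_add, nsmul_mod hg3, add_smul]
      abel
  }
  have hinj : Function.Injective φ := by
    rw [injective_iff_map_eq_zero]
    intro p hp
    have hp' : p.1.val • g + p.2.1 = 0 := hp
    have h1 : (p.1.val : ℕ) • g = 0 := by
      have hq := congrArg (fun t => g * t) hp'
      simp only [mul_add, mul_smul_comm, hg.eq, hgs p.2, add_zero, mul_zero] at hq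
      exact hq
    have hp1 : p.1 = 0 := by
      rcases zmod3_cases p.1 with h0 | h0 | h0
      · exact h0
      · exfalso
        rw [h0, ZMod.val_one, one_smul] at h1
        exact hg0 h1
      · exfalso
        rw [h0, show (2 : ZMod 3).val = 2 from rfl, two_nsmul] at h1
        have hr : g = (g + g + g) - (g + g) := by abel
        exact hg0 (by rw [hr, hg3, h1, sub_zero])
    have hp2 : p.2.1 = 0 := by
      rw [hp1, ZMod.val_zero, zero_smul, zero_add] at hp'
      exact hp'
    exact Prod.ext hp1 (Subtype.ext hp2)
  have hsurj : Function.Surjective φ := by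
    intro x
    obtain ⟨m, hm⟩ := pick3 hg3 (hz3 x)
    refine ⟨(m, ⟨h * x, by rw [← mul_assoc, hh.eq]⟩), ?_⟩
    show m.val • g + h * x = x
    rw [hm, ← add_mul, hgplush, one_mul]
  exact ⟨{x : R // h * x = x}, instB, hBool,
    ⟨(RingEquiv.ofBijective φ ⟨hinj, hsurj⟩).symm⟩⟩

private lemma z3z3_case {g₁ g₂ : R} (hg₁ : IsIdempotentElem g₁) (hg₂ : IsIdempotentElem g₂)
    (h10 : g₁ ≠ 0) (h20 : g₂ ≠ 0) (h3g₁ : g₁ + g₁ + g₁ = 0) (h3g₂ : g₂ + g₂ + g₂ = 0)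
    (h12 : g₁ * g₂ = 0) (h21 : g₂ * g₁ = 0) (hone : g₁ + g₂ = 1)
    (hz₁ : ∀ x : R, g₁ * x = 0 ∨ g₁ * x = g₁ ∨ g₁ * x = -g₁)
    (hz₂ : ∀ x : R, g₂ * x = 0 ∨ g₂ * x = g₂ ∨ g₂ * x = -g₂) :
    Nonempty (R ≃+* (ZMod 3 × ZMod 3)) := by
  haveI : Fact (1 < 3) := ⟨by norm_num⟩
  let φ : (ZMod 3 × ZMod 3) →+* R := {
    toFun := fun p => p.1.val • g₁ + p.2.val • g₂
    map_one' := by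
      show (1 : ZMod 3).val • g₁ + (1 : ZMod 3).val • g₂ = 1
      rw [ZMod.val_one, one_smul, one_smul]
      exact hone
    map_mul' := fun p q => by
      show ((p.1 * q.1).val) • g₁ + ((p.2 * q.2).val) • g₂ =
        (p.1.val • g₁ + p.2.val • g₂) * (q.1.val • g₁ + q.2.val • g₂)
      rw [ZMod.val_mul, ZMod.val_mul, nsmul_mod h3g₁, nsmul_mod h3g₂]
      rw [mul_add, add_mul, add_mul]
      rw [smul_mul_smul_comm, hg₁.eq, smul_mul_smul_comm, h21, smul_zero,
        smul_mul_smul_comm, h12, smul_zero, smul_mul_smul_comm, hg₂.eq]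
      rw [mul_smul, mul_smul]
      abel
    map_zero' := by
      show (0 : ZMod 3).val • g₁ + (0 : ZMod 3).val • g₂ = 0
      rw [ZMod.val_zero, zero_smul, zero_smul, add_zero]
    map_add' := fun p q => by
      show ((p.1 + q.1).val) • g₁ + ((p.2 + q.2).val) • g₂ =
        (p.1.val • g₁ + p.2.val • g₂) + (q.1.val • g₁ + q.2.val • g₂)
      rw [ZMod.val_add, ZMod.val_add, nsmul_mod h3g₁, nsmul_mod h3g₂, add_smul, add_smul]
      abel
  }
  have kill : ∀ (g : R), IsIdempotentElem g → g ≠ 0 → g + g + g = 0 →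
      ∀ k : ZMod 3, (k.val : ℕ) • g = 0 → k = 0 := by
    intro g hg hgz hg3 k hk
    rcases zmod3_cases k with h0 | h0 | h0
    · exact h0
    · exfalso
      rw [h0, ZMod.val_one, one_smul] at hk
      exact hgz hk
    · exfalso
      rw [h0, show (2 : ZMod 3).val = 2 from rfl, two_nsmul] at hk
      have hr : g = (g + g + g) - (g + g) := by abel
      exact hgz (by rw [hr, hg3, hk, sub_zero])
  have hinj : Function.Injective φ := by
    rw [injective_iff_map_eq_zero]
    intro p hp
    have hp' : p.1.val • g₁ + p.2.val • g₂ = 0 := hp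
    have h1 : (p.1.val : ℕ) • g₁ = 0 := by
      have hq := congrArg (fun t => g₁ * t) hp'
      simp only [mul_add, mul_smul_comm, hg₁.eq, h12, smul_zero, add_zero, mul_zero] at hq
      exact hq
    have h2 : (p.2.val : ℕ) • g₂ = 0 := by
      have hq := congrArg (fun t => g₂ * t) hp'
      simp only [mul_add, mul_smul_comm, hg₂.eq, h21, smul_zero, zero_add, mul_zero] at hq
      exact hq
    exact Prod.ext (kill g₁ hg₁ h10 h3g₁ p.1 h1) (kill g₂ hg₂ h20 h3g₂ p.2 h2)
  have hsurj : Function.Surjective φ := by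
    intro x
    have hx : x = g₁ * x + g₂ * x := by rw [← add_mul, hone, one_mul]
    obtain ⟨m, hm⟩ := pick3 h3g₁ (hz₁ x)
    obtain ⟨n, hn⟩ := pick3 h3g₂ (hz₂ x)
    refine ⟨(m, n), ?_⟩
    show m.val • g₁ + n.val • g₂ = x
    rw [hm, hn, ← hx]
  exact ⟨(RingEquiv.ofBijective φ ⟨hinj, hsurj⟩).symm⟩

private lemma bool_two {B : Type v} [Ring B] (hB : IsBooleanRing B) (x : B) : x + x = 0 := by
  have h := (hB (x + x)).eq
  have hexp : (x + x) * (x + x) = (x * x + x * x) + (x * x + x * x) := by noncomm_ring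
  rw [hexp, (hB x).eq] at h
  exact add_right_cancel (h.trans (zero_add (x + x)).symm)

private lemma bool_comm {B : Type v} [Ring B] (hB : IsBooleanRing B) (x y : B) :
    x * y = y * x := by
  have hxy : x * y + y * x = 0 := by
    have h := (hB (x + y)).eq
    have hexp : (x + y) * (x + y) = (x + y) + (x * y + y * x) := by
      have hr : (x + y) * (x + y) = (x * x + y * y) + (x * y + y * x) := by noncomm_ring
      rw [hr, (hB x).eq, (hB y).eq]
    rw [hexp] at h
    exact add_left_cancel (h.trans (add_zero (x + y)).symm)
  have h1 : x * y = -(y * x) := eq_neg_of_add_eq_zero_left hxy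
  have h2 : -(y * x) = y * x := neg_eq_of_add_eq_zero_left (bool_two hB (y * x))
  exact h1.trans h2

private lemma lhs_transfer {S : Type v} [Ring S] (E : R ≃+* S)
    (h1 : AbelianRing S)
    (h2 : ∀ a : S, IsZeroDivisorPair a → IsVeryIdempotent a ∨ IsNilpotent a) :
    AbelianRing R ∧ ∀ a : R, IsZeroDivisorPair a → IsVeryIdempotent a ∨ IsNilpotent a := by
  constructor
  · intro e he x
    apply E.injective
    rw [map_mul, map_mul]
    exact h1 (E e) (he.map E) (E x)
  · intro a ha
    obtain ⟨b, c, hb, hc, hab1, hca1⟩ := ha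
    have haS : IsZeroDivisorPair (E a) :=
      ⟨E b, E c,
        fun h0 => hb (by apply E.injective; rw [h0, map_zero]),
        fun h0 => hc (by apply E.injective; rw [h0, map_zero]),
        by rw [← map_mul, hab1, map_zero],
        by rw [← map_mul, hca1, map_zero]⟩
    rcases h2 (E a) haS with (hi | hi) | hn
    · left; left
      have := hi.map E.symm
      rwa [RingEquiv.symm_apply_apply] at this
    · left; right
      have := hi.map E.symm
      rwa [map_neg, RingEquiv.symm_apply_apply] at this
    · right
      obtain ⟨k, hk⟩ := hn
      exact ⟨k, by apply E.injective; rw [map_pow, hk, map_zero]⟩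

end Aux

theorem stmt12 (R : Type u) [Ring R] :
    (AbelianRing R ∧ ∀ a : R, IsZeroDivisorPair a → (IsVeryIdempotent a ∨ IsNilpotent a)) ↔
      ((∃ (S : Type u) (_ : Ring S),
          (∀ a : S, IsZeroDivisorPair a → IsNilpotent a) ∧ Nonempty (R ≃+* S)) ∨
       (∃ (B : Type u) (_ : Ring B), IsBooleanRing B ∧ Nonempty (R ≃+* B)) ∨
       Nonempty (R ≃+* (ZMod 3 × ZMod 3)) ∨
       (∃ (B : Type u) (_ : Ring B), IsBooleanRing B ∧ Nonempty (R ≃+* (ZMod 3 × B)))) := by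
  constructor
  · rintro ⟨hab, hzd⟩
    by_cases hE : ∃ e : R, IsIdempotentElem e ∧ e ≠ 0 ∧ e ≠ 1
    · -- there is a nontrivial idempotent
      obtain ⟨e, he, he0, he1⟩ := hE
      have hred := reduced_of_idem hab hzd he he0 he1
      have hf : IsIdempotentElem (1 - e) := he.one_sub
      have hf0 : (1 : R) - e ≠ 0 := sub_ne_zero.mpr (Ne.symm he1)
      have hf1 : (1 : R) - e ≠ 1 := fun hh => he0 (sub_eq_self.mp hh)
      obtain ⟨g₁, b₁, hg₁, hb₁, hgb₁, hsum₁, h3g₁, hbool₁, hz₁⟩ :=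
        corner_split hab hzd he he0 he1
      obtain ⟨g₂, b₂, hg₂, hb₂, hgb₂, hsum₂, h3g₂, hbool₂, hz₂⟩ :=
        corner_split hab hzd hf hf0 hf1
      have hef : e * (1 - e) = 0 := by rw [mul_sub, mul_one, he.eq, sub_self]
      have hfe : (1 - e) * e = 0 := by rw [sub_mul, one_mul, he.eq, sub_self]
      have hefsum : e + (1 - e) = 1 := by abel
      have hg₁e : g₁ * e = g₁ := by rw [← hsum₁, mul_add, hg₁.eq, hgb₁, add_zero]
      have heg₁ : e * g₁ = g₁ := by rw [hab e he g₁]; exact hg₁e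
      have hbg₁ : b₁ * g₁ = 0 := by rw [← hab g₁ hg₁ b₁]; exact hgb₁
      have hb₁e : b₁ * e = b₁ := by rw [← hsum₁, mul_add, hbg₁, hb₁.eq, zero_add]
      have heb₁ : e * b₁ = b₁ := by rw [hab e he b₁]; exact hb₁e
      have hg₂f : g₂ * (1 - e) = g₂ := by rw [← hsum₂, mul_add, hg₂.eq, hgb₂, add_zero]
      have hfg₂ : (1 - e) * g₂ = g₂ := by rw [hab (1 - e) hf g₂]; exact hg₂f
      have hbg₂ : b₂ * g₂ = 0 := by rw [← hab g₂ hg₂ b₂]; exact hgb₂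
      have hb₂f : b₂ * (1 - e) = b₂ := by rw [← hsum₂, mul_add, hbg₂, hb₂.eq, zero_add]
      have hfb₂ : (1 - e) * b₂ = b₂ := by rw [hab (1 - e) hf b₂]; exact hb₂f
      have cross : ∀ u v : R, u * e = u → (1 - e) * v = v → u * v = 0 := by
        intro u v hu hv
        rw [← hu, ← hv, mul_assoc, ← mul_assoc e (1 - e) v, hef, zero_mul, mul_zero]
      have cross' : ∀ u v : R, v * (1 - e) = v → e * u = u → v * u = 0 := by
        intro u v hv hu
        rw [← hv, ← hu, mul_assoc, ← mul_assoc (1 - e) e u, hfe, zero_mul, mul_zero]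
      have h12 : g₁ * g₂ = 0 := cross g₁ g₂ hg₁e hfg₂
      have h21 : g₂ * g₁ = 0 := cross' g₁ g₂ hg₂f heg₁
      have hb₁g₂ : b₁ * g₂ = 0 := cross b₁ g₂ hb₁e hfg₂
      have hg₂b₁ : g₂ * b₁ = 0 := cross' b₁ g₂ hg₂f heb₁
      have hg₁b₂ : g₁ * b₂ = 0 := cross g₁ b₂ hg₁e hfb₂
      have hb₂g₁ : b₂ * g₁ = 0 := cross' g₁ b₂ hb₂f heg₁
      have hb₁b₂ : b₁ * b₂ = 0 := cross b₁ b₂ hb₁e hfb₂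
      have hb₂b₁ : b₂ * b₁ = 0 := cross' b₁ b₂ hb₂f heb₁
      by_cases hz10 : g₁ = 0
      · by_cases hz20 : g₂ = 0
        · -- Boolean case
          right; left
          have hb₁' : b₁ = e := by rw [← hsum₁, hz10, zero_add]
          have hb₂' : b₂ = 1 - e := by rw [← hsum₂, hz20, zero_add]
          have hone : b₁ + b₂ = 1 := by rw [hb₁', hb₂']; exact hefsum
          refine ⟨R, inferInstance, ?_, ⟨RingEquiv.refl R⟩⟩
          intro x
          show x * x = x
          have h := bool_add hab hb₁ hb₂ hb₁b₂ hb₂b₁ hbool₁ hbool₂ x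
          rwa [hone, one_mul] at h
        · -- g₂ ≠ 0, g₁ = 0 : ZMod 3 × Boolean
          right; right; right
          have hb₁' : b₁ = e := by rw [← hsum₁, hz10, zero_add]
          have hcompl : (1 : R) - g₂ = b₁ + b₂ := by
            have hb2 : b₂ = (1 - e) - g₂ := by rw [← hsum₂]; abel
            rw [hb₁', hb2]; abel
          have hboolh : ∀ x : R, ((1 - g₂) * x) * ((1 - g₂) * x) = (1 - g₂) * x := by
            intro x
            rw [hcompl]
            exact bool_add hab hb₁ hb₂ hb₁b₂ hb₂b₁ hbool₁ hbool₂ x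
          exact z3_bool_case hab hg₂ hz20 h3g₂ hz₂ hboolh
      · by_cases hz20 : g₂ = 0
        · -- g₁ ≠ 0, g₂ = 0 : ZMod 3 × Boolean
          right; right; right
          have hb₂' : b₂ = 1 - e := by rw [← hsum₂, hz20, zero_add]
          have hcompl : (1 : R) - g₁ = b₁ + b₂ := by
            have hb1 : b₁ = e - g₁ := by rw [← hsum₁]; abel
            rw [hb₂', hb1]; abel
          have hboolh : ∀ x : R, ((1 - g₁) * x) * ((1 - g₁) * x) = (1 - g₁) * x := by
            intro x
            rw [hcompl]
            exact bool_add hab hb₁ hb₂ hb₁b₂ hb₂b₁ hbool₁ hbool₂ x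
          exact z3_bool_case hab hg₁ hz10 h3g₁ hz₁ hboolh
        · -- both nonzero : ZMod 3 × ZMod 3
          right; right; left
          have hkill : ∀ b : R, g₁ * b = 0 → g₂ * b = 0 → b * g₁ = 0 → b * g₂ = 0 → b = 0 := by
            intro b hk1 hk2 hk3 hk4
            by_contra hb0
            have hxzd : IsZeroDivisorPair (g₁ - g₂) :=
              ⟨b, b, hb0, hb0, by rw [sub_mul, hk1, hk2, sub_zero],
                by rw [mul_sub, hk3, hk4, sub_zero]⟩
            have hxx : (g₁ - g₂) * (g₁ - g₂) = g₁ + g₂ := by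
              have hr : (g₁ - g₂) * (g₁ - g₂) = (g₁ * g₁ + g₂ * g₂) - g₁ * g₂ - g₂ * g₁ := by
                noncomm_ring
              rw [hr, hg₁.eq, hg₂.eq, h12, h21, sub_zero, sub_zero]
            rcases hzd _ hxzd with (hi | hi) | hn
            · have hEq : g₁ + g₂ = g₁ - g₂ := hxx.symm.trans hi.eq
              have h2g : g₂ + g₂ = 0 := by
                have hr : g₂ + g₂ = (g₁ + g₂) - (g₁ - g₂) := by abel
                rw [hr, hEq, sub_self]
              apply hz20
              have hr : g₂ = (g₂ + g₂ + g₂) - (g₂ + g₂) := by abel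
              rw [hr, h3g₂, h2g, sub_zero]
            · have h' : (g₁ - g₂) * (g₁ - g₂) = -(g₁ - g₂) := by
                have := hi.eq; rwa [neg_mul_neg] at this
              have hEq : g₁ + g₂ = -(g₁ - g₂) := hxx.symm.trans h'
              have h2g : g₁ + g₁ = 0 := by
                have hr : g₁ + g₁ = (g₁ + g₂) + (g₁ - g₂) := by abel
                rw [hr, hEq, neg_add_cancel]
              apply hz10
              have hr : g₁ = (g₁ + g₁ + g₁) - (g₁ + g₁) := by abel
              rw [hr, h3g₁, h2g, sub_zero]
            · have heq12 : g₁ = g₂ := sub_eq_zero.mp (hred _ hn)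
              rw [← heq12] at h12
              exact hz10 (by rw [← hg₁.eq]; exact h12)
          have hb₁0 : b₁ = 0 := hkill b₁ hgb₁ hg₂b₁ hbg₁ hb₁g₂
          have hb₂0 : b₂ = 0 := hkill b₂ hg₁b₂ hgb₂ hb₂g₁ hbg₂
          have hone : g₁ + g₂ = 1 := by
            have h1 : g₁ = e := by rw [← hsum₁, hb₁0, add_zero]
            have h2' : g₂ = 1 - e := by rw [← hsum₂, hb₂0, add_zero]
            rw [h1, h2']; abel
          exact z3z3_case hg₁ hg₂ hz10 hz20 h3g₁ h3g₂ h12 h21 hone hz₁ hz₂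
    · -- only trivial idempotents: R itself is a D-ring
      push_neg at hE
      left
      refine ⟨R, inferInstance, ?_, ⟨RingEquiv.refl R⟩⟩
      intro a ha
      obtain ⟨b, c, hb0, hc0, hab1, hca1⟩ := ha
      rcases hzd a ⟨b, c, hb0, hc0, hab1, hca1⟩ with (hi | hi) | hn
      · by_cases h0 : a = 0
        · exact ⟨1, by rw [h0, pow_one]⟩
        · exfalso
          have h1 := hE a hi h0
          exact hb0 (by rwa [h1, one_mul] at hab1)
      · by_cases h0 : -a = 0
        · exact ⟨1, by rw [pow_one]; exact neg_eq_zero.mp h0⟩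
        · exfalso
          have h1 := hE (-a) hi h0
          have ha1 : a = -1 := neg_eq_iff_eq_neg.mp h1
          exact hc0 (by rwa [ha1, mul_neg_one, neg_eq_zero] at hca1)
      · exact hn
  · rintro (⟨S, iS, hD, ⟨E⟩⟩ | ⟨B, iB, hB, ⟨E⟩⟩ | ⟨E⟩ | ⟨B, iB, hB, ⟨E⟩⟩)
    · -- D-ring case
      refine lhs_transfer E ?_ ?_
      · intro s hs x
        by_cases h0 : s = 0
        · rw [h0, zero_mul, mul_zero]
        by_cases h1 : s = 1
        · rw [h1, one_mul, mul_one]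
        exfalso
        have hzds : IsZeroDivisorPair s :=
          ⟨1 - s, 1 - s, sub_ne_zero.mpr (Ne.symm h1), sub_ne_zero.mpr (Ne.symm h1),
            by rw [mul_sub, mul_one, hs.eq, sub_self],
            by rw [sub_mul, one_mul, hs.eq, sub_self]⟩
        exact h0 (idem_nil_zero hs (hD s hzds))
      · intro a ha
        exact Or.inr (hD a ha)
    · -- Boolean case
      refine lhs_transfer E ?_ ?_
      · intro e _ x
        exact bool_comm hB e x
      · intro a _
        exact Or.inl (Or.inl (hB a))
    · -- ZMod 3 × ZMod 3 case
      obtain ⟨E⟩ := E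
      refine lhs_transfer (S := ZMod 3 × ZMod 3) E ?_ ?_
      · intro e _ x
        exact mul_comm e x
      · intro a ha
        obtain ⟨b, c, hb, hc, h1, h2⟩ := ha
        have key : ∀ (a b c : ZMod 3 × ZMod 3), b ≠ 0 → c ≠ 0 → a * b = 0 → c * a = 0 →
            (a * a = a ∨ (-a) * (-a) = -a) := by decide
        rcases key a b c hb hc h1 h2 with h | h
        · exact Or.inl (Or.inl h)
        · exact Or.inl (Or.inr h)
    · -- ZMod 3 × Boolean case
      refine lhs_transfer E ?_ ?_
      · intro e _ x
        exact Prod.ext (mul_comm _ _) (bool_comm hB _ _)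
      · intro a _
        left
        have hneg : ∀ y : B, -y = y := fun y =>
          (neg_eq_of_add_eq_zero_left (bool_two hB y))
        rcases zmod3_cases a.1 with h0 | h0 | h0
        · left
          refine Prod.ext ?_ ?_
          · show a.1 * a.1 = a.1
            rw [h0, mul_zero]
          · exact (hB a.2).eq
        · left
          refine Prod.ext ?_ ?_
          · show a.1 * a.1 = a.1
            rw [h0, mul_one]
          · exact (hB a.2).eq
        · right
          refine Prod.ext ?_ ?_
          · show (-a.1) * (-a.1) = -a.1
            rw [h0]; decide
          · show (-a.2) * (-a.2) = -a.2
            rw [neg_mul_neg, (hB a.2).eq, hneg a.2]
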